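/- arXiv:1009.6040 — 2 statements merged into one kernel-verified Lean document; each statement's English description precedes it below -/
import Mathlib

section
/- Under the hypotheses of the zig-zag lemma for a double complex with row-contracting homotopy h, the collapsing map Ψ(c) = (−Dh)^k c − h(−Dh)^{k-1}(Dc) − h(−Dh)^k(δc), applied to c in column k, satisfies δ(Ψ(c)) = 0; i.e. Ψ(c) lies in the kernel of the horizontal differential. -/
/-- The collapsing operator of the zig-zag lemma:
`Ψ_k = (−Dh)^k − h(−Dh)^{k-1}D − h(−Dh)^k δ`. -/
def zigzagPsi {R : Type*} [Ring R] (δ D h : R) (k : ℕ) : R :=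
  (-(D * h)) ^ k - h * (-(D * h)) ^ (k - 1) * D - h * (-(D * h)) ^ k * δ

private lemma zigzag_comm {R : Type*} [Ring R] (δ D h : R)
    (hD : D * D = 0) (hanti : δ * D + D * δ = 0)
    (hcontr : δ * h + h * δ = 1) (k : ℕ) :
    δ * (-(D * h)) ^ (k + 1) = (-(D * h)) ^ k * D + (-(D * h)) ^ (k + 1) * δ := by
  set A : R := -(D * h) with hA
  have hδD : δ * D = -(D * δ) := eq_neg_of_add_eq_zero_left hanti
  have hδh : δ * h = 1 - h * δ := eq_sub_of_add_eq hcontr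
  have base : δ * A = D + A * δ := by
    have e1 : δ * A = -((δ * D) * h) := by rw [hA]; noncomm_ring
    rw [e1, hδD]
    have e2 : -(-(D * δ) * h) = D * (δ * h) := by noncomm_ring
    rw [e2, hδh, hA]
    noncomm_ring
  have hDA : D * A = 0 := by
    have : D * A = -(D * D * h) := by rw [hA]; noncomm_ring
    rw [this, hD]; simp
  induction k with
  | zero => simpa using base
  | succ n ih =>
      have p1 : A ^ (n + 2) = A ^ (n + 1) * A := pow_succ A (n + 1)
      rw [p1, ← mul_assoc, ih]
      generalize A ^ n = P at *
      generalize A ^ (n + 1) = Q at *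
      have : (P * D + Q * δ) * A = P * (D * A) + Q * (δ * A) := by noncomm_ring
      rw [this, hDA, base]
      noncomm_ring

/-- For `c` in column `k ≥ 2`, the collapsed cochain `Ψ(c)` is killed by the
horizontal differential: `δ(Ψ(c)) = 0`. -/
theorem zigzagPsi_delta {R : Type*} [Ring R] (δ D h : R)
    (hδ : δ * δ = 0) (hD : D * D = 0) (hanti : δ * D + D * δ = 0)
    (hcontr : δ * h + h * δ = 1) (k : ℕ) (hk : 2 ≤ k) :
    δ * zigzagPsi δ D h k = 0 := by
  obtain ⟨m, rfl⟩ : ∃ m, k = m + 2 := ⟨k - 2, by omega⟩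
  set A : R := -(D * h) with hA
  have c1 : δ * A ^ (m + 2) = A ^ (m + 1) * D + A ^ (m + 2) * δ :=
    zigzag_comm δ D h hD hanti hcontr (m + 1)
  have c2 : δ * A ^ (m + 1) = A ^ m * D + A ^ (m + 1) * δ :=
    zigzag_comm δ D h hD hanti hcontr m
  have hδh : δ * h = 1 - h * δ := eq_sub_of_add_eq hcontr
  show δ * (A ^ (m + 2) - h * A ^ (m + 2 - 1) * D - h * A ^ (m + 2) * δ) = 0
  have h1 : (m + 2 - 1) = m + 1 := rfl
  rw [h1]
  generalize A ^ m = P at *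
  generalize A ^ (m + 1) = Q at *
  generalize A ^ (m + 2) = S at *
  have expand : δ * (S - h * Q * D - h * S * δ)
      = (δ * S - Q * D - S * δ) + h * (δ * Q) * D + h * (δ * S) * δ
        - ((δ * h) - (1 - h * δ)) * (Q * D + S * δ) := by
    noncomm_ring
  rw [expand, hδh, c1, c2]
  have e : (Q * D + S * δ - Q * D - S * δ) + h * (P * D + Q * δ) * D + h * (Q * D + S * δ) * δ
      - (1 - h * δ - (1 - h * δ)) * (Q * D + S * δ)
      = h * P * (D * D) + h * Q * (δ * D + D * δ) + h * S * (δ * δ) := by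
    noncomm_ring
  rw [e, hD, hanti, hδ]
  simp
end

section
/- Under the hypotheses of the zig-zag lemma with row-contracting homotopy h, the collapsing map Ψ is a chain map: Ψ(δc + Dc) = D(Ψ(c)) for c in column k, where Ψ is given by Ψ(c) = (−Dh)^k c − h(−Dh)^{k-1}(Dc) − h(−Dh)^k(δc). -/
/-- The collapsing map is a chain map: `Ψ^k(Dc) + Ψ^{k+1}(δc) = D Ψ^k(c)`. -/
theorem zigzagPsi_chain_map {R : Type*} [Ring R] (δ D h : R)
    (hδ : δ * δ = 0) (hD : D * D = 0) (hanti : δ * D + D * δ = 0)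
    (hcontr : δ * h + h * δ = 1) (k : ℕ) (hk : 1 ≤ k) :
    zigzagPsi δ D h k * D + zigzagPsi δ D h (k + 1) * δ = D * zigzagPsi δ D h k := by
  cases k with
  | zero => omega
  | succ n =>
    obtain ⟨a, ha⟩ : ∃ a : R, a = -(D * h) := ⟨_, rfl⟩
    have hDh : D * h = -a := by rw [ha, neg_neg]
    have h1 : D * a = 0 := by
      rw [ha, mul_neg, ← mul_assoc, hD, zero_mul, neg_zero]
    have h2 : D * a ^ (n + 1) = 0 := by
      rw [pow_succ', ← mul_assoc, h1, zero_mul]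
    simp only [zigzagPsi, Nat.add_sub_cancel, ← ha]
    calc (a ^ (n + 1) - h * a ^ n * D - h * a ^ (n + 1) * δ) * D +
          (a ^ (n + 1 + 1) - h * a ^ (n + 1) * D - h * a ^ (n + 1 + 1) * δ) * δ
        = a ^ (n + 1) * D + a ^ (n + 2) * δ - h * (a ^ n * (D * D))
            - h * (a ^ (n + 1) * (δ * D + D * δ)) - h * (a ^ (n + 2) * (δ * δ)) := by
          noncomm_ring
      _ = a ^ (n + 1) * D + a ^ (n + 2) * δ := by
          rw [hD, hanti, hδ]; noncomm_ring
      _ = D * a ^ (n + 1) - (D * h) * (a ^ n * D) - (D * h) * (a ^ (n + 1) * δ) := by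
          have h3 : a * (a ^ n * D) = a ^ (n + 1) * D := by rw [← mul_assoc, ← pow_succ']
          have h4 : a * (a ^ (n + 1) * δ) = a ^ (n + 2) * δ := by rw [← mul_assoc, ← pow_succ']
          rw [hDh, h2, neg_mul, neg_mul, h3, h4]; noncomm_ring
      _ = D * (a ^ (n + 1) - h * a ^ n * D - h * a ^ (n + 1) * δ) := by noncomm_ring
end
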